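/- Let γ ∈ [1, 2) and x ≥ y ≥ 0. Then x^γ − y^γ ≥ (γ/2)(x − y)(x^{γ−1} + y^{γ−1}). -/

import Mathlib

open intervalIntegral Set

theorem stmt_5 (γ x y : ℝ) (hγ : 1 ≤ γ) (hγ2 : γ < 2) (hy : 0 ≤ y) (hxy : y ≤ x) :
    x ^ γ - y ^ γ ≥ (γ / 2) * (x - y) * (x ^ (γ - 1) + y ^ (γ - 1)) := by
  rcases eq_or_lt_of_le hxy with rfl | hlt
  · simp
  set p : ℝ := γ - 1 with hp
  have hp0 : 0 ≤ p := by linarith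
  have hp1 : p ≤ 1 := by linarith
  have hpn : -1 < p := by linarith
  have hd : 0 < x - y := by linarith
  -- the chord function
  set L : ℝ → ℝ := fun t => y ^ p + (t - y) / (x - y) * (x ^ p - y ^ p) with hL
  have hconc := Real.concaveOn_rpow hp0 hp1
  have hpt : ∀ t ∈ Set.Icc y x, L t ≤ t ^ p := by
    intro t ht
    obtain ⟨h1, h2⟩ := ht
    set b : ℝ := (t - y) / (x - y) with hb
    have hb0 : 0 ≤ b := div_nonneg (by linarith) hd.le
    have hb1 : b ≤ 1 := by
      rw [hb, div_le_one hd]; linarith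
    have key := hconc.2 (Set.mem_Ici.2 hy) (Set.mem_Ici.2 (le_trans hy hxy))
      (by linarith : (0:ℝ) ≤ 1 - b) hb0 (by ring)
    have ht' : (1 - b) • y + b • x = t := by
      simp only [smul_eq_mul, hb]
      field_simp
      ring
    rw [ht'] at key
    calc L t = (1 - b) • (y ^ p) + b • (x ^ p) := by
          simp only [smul_eq_mul, hL, hb]; ring
      _ ≤ t ^ p := key
  have hint1 : IntervalIntegrable (fun t : ℝ => t ^ p) MeasureTheory.volume y x :=
    intervalIntegral.intervalIntegrable_rpow' hpn
  have hint2 : IntervalIntegrable L MeasureTheory.volume y x := by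
    apply Continuous.intervalIntegrable
    fun_prop
  have hmono := intervalIntegral.integral_mono_on hxy hint2 hint1
    (fun t ht => hpt t ht)
  have hIL : ∫ t in y..x, L t = (x - y) * (x ^ p + y ^ p) / 2 := by
    have hrw : L = fun t : ℝ => (y ^ p - y * ((x ^ p - y ^ p) / (x - y)))
        + ((x ^ p - y ^ p) / (x - y)) * t := by
      funext t; simp only [hL]; field_simp; ring
    rw [hrw, intervalIntegral.integral_add intervalIntegrable_const
      ((Continuous.intervalIntegrable (by fun_prop) y x) : IntervalIntegrable (fun t : ℝ => (x ^ p - y ^ p) / (x - y) * t)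
        MeasureTheory.volume y x),
      intervalIntegral.integral_const, intervalIntegral.integral_const_mul,
      integral_id]
    rw [smul_eq_mul]
    field_simp
    ring
  have hIr : ∫ t in y..x, t ^ p = (x ^ γ - y ^ γ) / γ := by
    rw [integral_rpow (Or.inl hpn)]
    norm_num [hp]
  have hγpos : (0:ℝ) < γ := by linarith
  rw [hIL, hIr] at hmono
  have hfin : (x - y) * (x ^ p + y ^ p) / 2 * γ ≤ x ^ γ - y ^ γ :=
    (le_div_iff₀ hγpos).mp hmono
  have : γ / 2 * (x - y) * (x ^ p + y ^ p) = (x - y) * (x ^ p + y ^ p) / 2 * γ := by ring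
  linarith
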